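/- arXiv:0705.0561 — 3 statements merged into one kernel-verified Lean document; each statement's English description precedes it below -/
import Mathlib

section
/- For two binary strings s1 and s2 of length n, the minimum over all binary strings t of length n of max(d(t,s1), d(t,s2)) equals the ceiling of d(s1,s2)/2, where d is Hamming distance. -/
/-- For two binary strings `s1 s2` of length `n`, the minimum over all binary strings
`t` of `max (d(t,s1)) (d(t,s2))` equals `⌈d(s1,s2)/2⌉`. -/
theorem closest_string_two_strings (n : ℕ) (s1 s2 : Fin n → Bool) :
    IsLeast {d : ℕ | ∃ t : Fin n → Bool,
        max (hammingDist t s1) (hammingDist t s2) = d}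
      ((hammingDist s1 s2 + 1) / 2) := by
  set D := hammingDist s1 s2 with hD
  constructor
  · -- membership: construct t
    classical
    set A : Finset (Fin n) := Finset.univ.filter (fun i => s1 i ≠ s2 i) with hA
    have hcardA : A.card = D := rfl
    obtain ⟨B, hBA, hBcard⟩ := Finset.exists_subset_card_eq (s := A) (n := D / 2)
      (by rw [hcardA]; exact Nat.div_le_self _ _)
    refine ⟨fun i => if i ∈ B then s2 i else s1 i, ?_⟩
    have h1 : hammingDist (fun i => if i ∈ B then s2 i else s1 i) s1 = D / 2 := by
      rw [← hBcard]
      unfold hammingDist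
      congr 1
      ext i
      simp only [Finset.mem_filter, Finset.mem_univ, true_and]
      by_cases hi : i ∈ B
      · simp [hi]
        have := hBA hi
        simp [hA, Finset.mem_filter] at this
        exact fun h => this h.symm
      · simp [hi]
    have h2 : hammingDist (fun i => if i ∈ B then s2 i else s1 i) s2 = D - D / 2 := by
      have : hammingDist (fun i => if i ∈ B then s2 i else s1 i) s2 = (A \ B).card := by
        unfold hammingDist
        congr 1
        ext i
        simp only [Finset.mem_filter, Finset.mem_univ, true_and, Finset.mem_sdiff, hA]
        by_cases hi : i ∈ B
        · simp [hi]
        · simp [hi]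
      rw [this, Finset.card_sdiff_of_subset hBA, hcardA, hBcard]
    rw [h1, h2]
    omega
  · rintro d ⟨t, rfl⟩
    have htri : D ≤ hammingDist t s1 + hammingDist t s2 := by
      calc D = hammingDist s1 s2 := rfl
        _ ≤ hammingDist s1 t + hammingDist t s2 := hammingDist_triangle _ _ _
        _ = hammingDist t s1 + hammingDist t s2 := by rw [hammingDist_comm]
    have h1 : hammingDist t s1 ≤ max (hammingDist t s1) (hammingDist t s2) := le_max_left _ _
    have h2 : hammingDist t s2 ≤ max (hammingDist t s1) (hammingDist t s2) := le_max_right _ _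
    omega
end

section
/- For three binary strings s1, s2, s3 in the canonical block form (blocks of sizes α, β, γ as described), there exists an optimal center string t (one minimizing max_i d(t,s_i)) such that t has no ones in block α, or no zeros in block β, or no zeros in block γ. -/
lemma flip_count {n : ℕ} (t s : Fin n → Bool) (A : Finset (Fin n)) :
    hammingDist (fun x => if x ∈ A then !t x else t x) s
      + 2 * (A.filter (fun x => t x ≠ s x)).card
    = hammingDist t s + A.card := by
  classical
  have key : ∀ (u : Fin n → Bool),
      hammingDist u s = ((Finset.univ.filter (fun x => u x ≠ s x ∧ x ∈ A)).card
        + (Finset.univ.filter (fun x => u x ≠ s x ∧ x ∉ A)).card) := by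
    intro u
    rw [hammingDist]
    rw [← Finset.filter_filter, ← Finset.filter_filter,
      Finset.card_filter_add_card_filter_not (p := fun x => x ∈ A)]
  rw [key, key]
  have h1 : Finset.univ.filter (fun x => (if x ∈ A then !t x else t x) ≠ s x ∧ x ∈ A)
      = A.filter (fun x => t x = s x) := by
    ext x
    by_cases hx : x ∈ A <;> simp [hx]
  have h2 : Finset.univ.filter (fun x => (if x ∈ A then !t x else t x) ≠ s x ∧ x ∉ A)
      = Finset.univ.filter (fun x => t x ≠ s x ∧ x ∉ A) := by
    ext x
    by_cases hx : x ∈ A <;> simp [hx]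
  have h3 : Finset.univ.filter (fun x => t x ≠ s x ∧ x ∈ A)
      = A.filter (fun x => t x ≠ s x) := by
    ext x; simp [and_comm]
  have h4 : (A.filter (fun x => t x = s x)).card + (A.filter (fun x => t x ≠ s x)).card
      = A.card := by
    rw [← Finset.card_filter_add_card_filter_not (p := fun x => t x = s x) (s := A)]
  rw [h1, h2, h3]
  omega

/-- There is an optimal center string which has no ones in block α, or no zeros in
block β, or no zeros in block γ. -/
theorem exists_optimal_center_with_empty_block (α β γ : ℕ)
    (s1 s2 s3 : Fin (α + β + γ) → Bool)
    (hs1 : ∀ i : Fin (α + β + γ), s1 i = decide (α + β ≤ (i : ℕ)))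
    (hs2 : ∀ i : Fin (α + β + γ), s2 i = decide (α ≤ (i : ℕ) ∧ (i : ℕ) < α + β))
    (hs3 : ∀ i : Fin (α + β + γ), s3 i = true) :
    ∃ t : Fin (α + β + γ) → Bool,
      (∀ t' : Fin (α + β + γ) → Bool,
        max (max (hammingDist t s1) (hammingDist t s2)) (hammingDist t s3) ≤
        max (max (hammingDist t' s1) (hammingDist t' s2)) (hammingDist t' s3)) ∧
      ((Finset.univ.filter
          (fun i : Fin (α + β + γ) => (i : ℕ) < α ∧ t i = true)).card = 0 ∨
       (Finset.univ.filter
          (fun i : Fin (α + β + γ) => α ≤ (i : ℕ) ∧ (i : ℕ) < α + β ∧ t i = false)).card = 0 ∨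
       (Finset.univ.filter
          (fun i : Fin (α + β + γ) => α + β ≤ (i : ℕ) ∧ t i = false)).card = 0) := by
  classical
  obtain ⟨t, -, hmin⟩ := Finset.exists_min_image
    (Finset.univ : Finset (Fin (α + β + γ) → Bool))
    (fun t => max (max (hammingDist t s1) (hammingDist t s2)) (hammingDist t s3))
    ⟨fun _ => false, Finset.mem_univ _⟩
  refine ⟨t, fun t' => hmin t' (Finset.mem_univ _), ?_⟩
  by_contra hcon
  push_neg at hcon
  obtain ⟨h1, h2, h3⟩ := hcon
  obtain ⟨i, hi⟩ := Finset.card_ne_zero.mp h1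
  obtain ⟨j, hj⟩ := Finset.card_ne_zero.mp h2
  obtain ⟨k, hk⟩ := Finset.card_ne_zero.mp h3
  simp only [Finset.mem_filter, Finset.mem_univ, true_and] at hi hj hk
  have hij : i ≠ j := fun h => by subst h; omega
  have hik : i ≠ k := fun h => by subst h; omega
  have hjk : j ≠ k := fun h => by subst h; omega
  set A : Finset (Fin (α + β + γ)) := {i, j, k} with hA
  have hAcard : A.card = 3 := by
    rw [hA, Finset.card_insert_of_notMem (by simp [hij, hik]),
      Finset.card_insert_of_notMem (by simp [hjk]), Finset.card_singleton]
  set t' : Fin (α + β + γ) → Bool := fun x => if x ∈ A then !t x else t x with ht'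
  -- values of the strings at i, j, k
  have e1i : s1 i = false := by rw [hs1]; simp; omega
  have e1j : s1 j = false := by rw [hs1]; simp; omega
  have e1k : s1 k = true := by rw [hs1]; simp; omega
  have e2i : s2 i = false := by rw [hs2]; simp; omega
  have e2j : s2 j = true := by rw [hs2]; simp; omega
  have e2k : s2 k = false := by rw [hs2]; simp; omega
  have c1 : (A.filter (fun x => t x ≠ s1 x)).card = 2 := by
    rw [hA, Finset.filter_insert, Finset.filter_insert, Finset.filter_singleton]
    rw [if_pos (by simp [hi.2, e1i]), if_neg (by simp [hj.2.2, e1j]),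
      if_pos (by simp [hk.2, e1k])]
    simp [hik]
  have c2 : (A.filter (fun x => t x ≠ s2 x)).card = 2 := by
    rw [hA, Finset.filter_insert, Finset.filter_insert, Finset.filter_singleton]
    rw [if_pos (by simp [hi.2, e2i]), if_pos (by simp [hj.2.2, e2j]),
      if_neg (by simp [hk.2, e2k])]
    simp [hij]
  have c3 : (A.filter (fun x => t x ≠ s3 x)).card = 2 := by
    rw [hA, Finset.filter_insert, Finset.filter_insert, Finset.filter_singleton]
    rw [if_neg (by simp [hi.2, hs3]), if_pos (by simp [hj.2.2, hs3]),
      if_pos (by simp [hk.2, hs3])]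
    simp [hjk]
  have f1 := flip_count t s1 A
  have f2 := flip_count t s2 A
  have f3 := flip_count t s3 A
  rw [c1, hAcard] at f1
  rw [c2, hAcard] at f2
  rw [c3, hAcard] at f3
  have hle := hmin t' (Finset.mem_univ _)
  simp only [ht'] at hle
  simp only [max_le_iff, le_max_iff] at hle
  omega
end

section
/- For three binary strings in canonical block form with b = 0 forced (optimal center agrees with all-ones on block β) and a ≤ c (number of ones in block α at most the number of zeros in block γ), setting a' = 0, c' = c − a gives distances D1' = β + c', D2 = γ − c', D3 = α + c', and if additionally every optimal solution has b = 0 then |D3 − D2| ≤ 1. -/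
/-- With `α ≤ γ`: if every optimal `(a,b,c)` has `b = 0`, then for any optimal
`(a,b,c)` with `a ≤ c`, setting `a' = 0`, `c' = c - a` gives distances
`β + c'`, `γ - c'`, `α + c'`, and the optimal distances satisfy `|D3 - D2| ≤ 1`. -/
theorem b_forced_zero_implies_D2_D3_close (α β γ : ℕ) (hαγ : α ≤ γ)
    (hforce : ∀ a' b' c' : ℕ, a' ≤ α → b' ≤ β → c' ≤ γ →
      (∀ a'' b'' c'' : ℕ, a'' ≤ α → b'' ≤ β → c'' ≤ γ →
        max (max (a' + (β - b') + c') (a' + b' + (γ - c'))) ((α - a') + b' + c') ≤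
        max (max (a'' + (β - b'') + c'') (a'' + b'' + (γ - c'')))
          ((α - a'') + b'' + c'')) → b' = 0) :
    ∀ a b c : ℕ, a ≤ α → b ≤ β → c ≤ γ → a ≤ c →
      (∀ a'' b'' c'' : ℕ, a'' ≤ α → b'' ≤ β → c'' ≤ γ →
        max (max (a + (β - b) + c) (a + b + (γ - c))) ((α - a) + b + c) ≤
        max (max (a'' + (β - b'') + c'') (a'' + b'' + (γ - c'')))
          ((α - a'') + b'' + c'')) →
      (0 + (β - 0) + (c - a) = β + (c - a) ∧
       0 + 0 + (γ - (c - a)) = γ - (c - a) ∧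
       (α - 0) + 0 + (c - a) = α + (c - a)) ∧
      ((α - a) + b + c ≤ (a + b + (γ - c)) + 1 ∧
       a + b + (γ - c) ≤ ((α - a) + b + c) + 1) := by
  intro a b c ha hb hc hac hopt
  have hb0 : b = 0 := hforce a b c ha hb hc hopt
  subst hb0
  refine ⟨by omega, ?_, ?_⟩
  · -- D3 ≤ D2 + 1: otherwise (a, 0, c-1) is strictly better
    by_contra h
    have hc1 : 1 ≤ c := by omega
    have h2 := hopt a 0 (c - 1) ha (Nat.zero_le β) (by omega)
    omega
  · -- D2 ≤ D3 + 1
    by_contra h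
    have hγc : c + 1 ≤ γ := by omega
    by_cases hβ : 1 ≤ β
    · -- (a, 1, c+1) is also optimal, contradicting hforce
      have key : max (max (a + (β - 1) + (c + 1)) (a + 1 + (γ - (c + 1))))
          ((α - a) + 1 + (c + 1)) ≤
          max (max (a + (β - 0) + c) (a + 0 + (γ - c))) ((α - a) + 0 + c) := by
        omega
      have := hforce a 1 (c + 1) ha hβ hγc
        (fun a'' b'' c'' h1 h2 h3 => le_trans key (hopt a'' b'' c'' h1 h2 h3))
      omega
    · -- β = 0: one of (a-1, 0, c) or (a, 0, c+1) is strictly better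
      have h2 := hopt (a - 1) 0 c (by omega) (Nat.zero_le β) hc
      have h3 := hopt a 0 (c + 1) ha (Nat.zero_le β) hγc
      omega
end
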